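/- If {Q_N} is a sequence in Π with A^1_T(Q_N) → 0, and a subsequence Q_{N_k} converges weakly to some probability measure Q_*, then Q_* ∈ Π and S is a Q_*-martingale. -/

import Mathlib

open MeasureTheory Filter Topology
open scoped ENNReal NNReal

noncomputable def gain (T : ℕ) (Δ : ℕ → (Fin T → ℝ) → ℝ) (x : Fin T → ℝ) : ℝ :=
  ∑ i ∈ Finset.range (T - 1),
    if h : i + 1 < T then Δ i x * (x ⟨i + 1, h⟩ - x ⟨i, Nat.lt_of_succ_lt h⟩) else 0

def IsCtsStrategy (T : ℕ) (N : ℝ) (Δ : ℕ → (Fin T → ℝ) → ℝ) : Prop :=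
  ∀ i, Continuous (Δ i) ∧ (∀ x, |Δ i x| ≤ N) ∧
    ∀ x y : Fin T → ℝ, (∀ j : Fin T, (j : ℕ) ≤ i → x j = y j) → Δ i x = Δ i y

noncomputable def Acts (T : ℕ) (Q : Measure (Fin T → ℝ)) : ℝ :=
  sSup {r : ℝ | ∃ Δ, IsCtsStrategy T 1 Δ ∧ r = ∫ x, gain T Δ x ∂Q}

def canonicalFiltration (T : ℕ) (i : ℕ) : MeasurableSpace (Fin T → ℝ) :=
  ⨆ j : {j : Fin T // (j : ℕ) ≤ i}, MeasurableSpace.comap (fun x => x j.1) inferInstance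

section Aux

variable {T : ℕ}

lemma integrable_coord {P : Measure (Fin T → ℝ)} {ν : Measure ℝ} (t : Fin T)
    (hmarg : P.map (fun x => x t) = ν) (hmom : Integrable id ν) :
    Integrable (fun x => x t) P := by
  rw [← hmarg] at hmom
  simpa using (integrable_map_measure aestronglyMeasurable_id
    (measurable_pi_apply t).aemeasurable).mp hmom

lemma integral_abs_coord {P : Measure (Fin T → ℝ)} {ν : Measure ℝ} (t : Fin T)
    (hmarg : P.map (fun x => x t) = ν) :
    ∫ x, |x t| ∂P = ∫ u, |u| ∂ν := by
  rw [← hmarg, integral_map (measurable_pi_apply t).aemeasurable]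
  exact (continuous_abs.stronglyMeasurable).aestronglyMeasurable

lemma gain_single {i : ℕ} (h : i + 1 < T) (f : (Fin T → ℝ) → ℝ) :
    gain T (fun j => if j = i then f else 0)
      = fun x => f x * (x ⟨i + 1, h⟩ - x ⟨i, Nat.lt_of_succ_lt h⟩) := by
  funext x
  unfold gain
  rw [Finset.sum_eq_single_of_mem i (Finset.mem_range.mpr (by omega))]
  · simp [h]
  · intro j _ hji
    split <;> simp [hji]

lemma gain_neg (Δ : ℕ → (Fin T → ℝ) → ℝ) :
    gain T (fun j x => -(Δ j x)) = fun x => -(gain T Δ x) := by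
  funext x
  unfold gain
  rw [← Finset.sum_neg_distrib]
  refine Finset.sum_congr rfl fun j _ => ?_
  split <;> ring

lemma strategy_single {i : ℕ} (f : (Fin T → ℝ) → ℝ) (hfc : Continuous f)
    (hfb : ∀ x, |f x| ≤ 1)
    (hfa : ∀ x y : Fin T → ℝ, (∀ j : Fin T, (j : ℕ) ≤ i → x j = y j) → f x = f y) :
    IsCtsStrategy T 1 (fun j => if j = i then f else 0) := by
  intro j
  by_cases hj : j = i
  · subst hj
    exact ⟨by simpa using hfc, by simpa using hfb, by simpa using hfa⟩
  · simp only [if_neg hj]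
    exact ⟨continuous_const, fun x => by simp, fun x y _ => rfl⟩

lemma strategy_neg {Δ : ℕ → (Fin T → ℝ) → ℝ} (hΔ : IsCtsStrategy T 1 Δ) :
    IsCtsStrategy T 1 (fun j x => -(Δ j x)) := by
  intro j
  obtain ⟨hc, hb, ha⟩ := hΔ j
  exact ⟨hc.neg, fun x => by simpa using hb x, fun x y hxy => by simp only []; rw [ha x y hxy]⟩

end Aux

section Bounds

variable {T : ℕ}

noncomputable def gainBound (T : ℕ) (x : Fin T → ℝ) : ℝ :=
  ∑ j ∈ Finset.range (T - 1),
    if h : j + 1 < T then |x ⟨j + 1, h⟩| + |x ⟨j, Nat.lt_of_succ_lt h⟩| else 0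

lemma abs_gain_le {Δ : ℕ → (Fin T → ℝ) → ℝ} (hΔ : IsCtsStrategy T 1 Δ) (x : Fin T → ℝ) :
    |gain T Δ x| ≤ gainBound T x := by
  refine (Finset.abs_sum_le_sum_abs _ _).trans (Finset.sum_le_sum fun j _ => ?_)
  by_cases h : j + 1 < T
  · simp only [dif_pos h]
    calc |Δ j x * (x ⟨j + 1, h⟩ - x ⟨j, Nat.lt_of_succ_lt h⟩)|
        = |Δ j x| * |x ⟨j + 1, h⟩ - x ⟨j, Nat.lt_of_succ_lt h⟩| := abs_mul _ _
      _ ≤ 1 * (|x ⟨j + 1, h⟩| + |x ⟨j, Nat.lt_of_succ_lt h⟩|) :=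
          mul_le_mul ((hΔ j).2.1 x) (abs_sub _ _) (abs_nonneg _) zero_le_one
      _ = _ := one_mul _
  · simp [dif_neg h]

lemma continuous_gain {Δ : ℕ → (Fin T → ℝ) → ℝ} (hΔ : IsCtsStrategy T 1 Δ) :
    Continuous (gain T Δ) := by
  unfold gain
  refine continuous_finset_sum _ fun j _ => ?_
  by_cases h : j + 1 < T
  · simp only [dif_pos h]
    exact (hΔ j).1.mul ((continuous_apply _).sub (continuous_apply _))
  · simp only [dif_neg h]
    exact continuous_const

lemma integrable_gainBound {P : Measure (Fin T → ℝ)}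
    (hint : ∀ t, Integrable (fun x => x t) P) :
    Integrable (gainBound T) P := by
  unfold gainBound
  refine integrable_finset_sum _ fun j _ => ?_
  by_cases h : j + 1 < T
  · simp only [dif_pos h]
    exact ((hint _).abs).add ((hint _).abs)
  · simp [dif_neg h]

lemma integrable_gain {P : Measure (Fin T → ℝ)} {Δ : ℕ → (Fin T → ℝ) → ℝ}
    (hΔ : IsCtsStrategy T 1 Δ) (hint : ∀ t, Integrable (fun x => x t) P) :
    Integrable (gain T Δ) P := by
  refine (integrable_gainBound hint).mono' (continuous_gain hΔ).aestronglyMeasurable ?_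
  exact ae_of_all _ fun x => by simpa [Real.norm_eq_abs] using abs_gain_le hΔ x

lemma acts_bddAbove {P : Measure (Fin T → ℝ)}
    (hint : ∀ t, Integrable (fun x => x t) P) :
    BddAbove {r : ℝ | ∃ Δ, IsCtsStrategy T 1 Δ ∧ r = ∫ x, gain T Δ x ∂P} := by
  refine ⟨∫ x, gainBound T x ∂P, fun r hr => ?_⟩
  obtain ⟨Δ, hΔ, rfl⟩ := hr
  exact integral_mono (integrable_gain hΔ hint) (integrable_gainBound hint)
    fun x => (le_abs_self _).trans (abs_gain_le hΔ x)

lemma abs_integral_gain_le_acts {P : Measure (Fin T → ℝ)} {Δ : ℕ → (Fin T → ℝ) → ℝ}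
    (hΔ : IsCtsStrategy T 1 Δ) (hint : ∀ t, Integrable (fun x => x t) P) :
    |∫ x, gain T Δ x ∂P| ≤ Acts T P := by
  have h1 : ∫ x, gain T Δ x ∂P ≤ Acts T P :=
    le_csSup (acts_bddAbove hint) ⟨Δ, hΔ, rfl⟩
  have h2 : -∫ x, gain T Δ x ∂P ≤ Acts T P := by
    refine le_csSup (acts_bddAbove hint) ⟨_, strategy_neg hΔ, ?_⟩
    rw [gain_neg, integral_neg]
  exact abs_le.mpr ⟨neg_le.mp h2, h1⟩

end Bounds

section Trunc

noncomputable def trunc (M u : ℝ) : ℝ := max (-M) (min u M)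

lemma continuous_trunc (M : ℝ) : Continuous (trunc M) :=
  continuous_const.max ((continuous_id.min continuous_const))

lemma abs_trunc_le {M : ℝ} (hM : 0 ≤ M) (u : ℝ) : |trunc M u| ≤ M :=
  abs_le.mpr ⟨le_max_left _ _, max_le (by linarith) (min_le_right _ _)⟩

lemma abs_sub_trunc_le {M : ℝ} (hM : 0 ≤ M) (u : ℝ) : |u - trunc M u| ≤ |u| := by
  unfold trunc
  rcases le_total u (-M) with h1 | h1
  · rw [max_eq_left ((min_le_left u M).trans h1)]
    rw [abs_of_nonpos (by linarith), abs_of_nonpos (by linarith : u ≤ 0)]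
    linarith
  · rw [max_eq_right (le_min h1 (by linarith))]
    rcases le_total u M with h2 | h2
    · rw [min_eq_left h2]; simp
    · rw [min_eq_right h2, abs_of_nonneg (by linarith),
        abs_of_nonneg (by linarith : (0:ℝ) ≤ u)]
      linarith

lemma trunc_eq {M u : ℝ} (hM : |u| ≤ M) : trunc M u = u := by
  obtain ⟨h1, h2⟩ := abs_le.mp hM
  unfold trunc
  rw [min_eq_left h2, max_eq_right h1]

lemma tendsto_trunc_err {ν : Measure ℝ} (hmom : Integrable id ν) :
    Tendsto (fun M : ℕ => ∫ u, |u - trunc M u| ∂ν) atTop (𝓝 0) := by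
  have h0 : (0 : ℝ) = ∫ u, (0 : ℝ) ∂ν := by simp
  rw [h0]
  refine tendsto_integral_of_dominated_convergence (fun u => |u|)
    (fun M => (continuous_abs.comp (continuous_id.sub (continuous_trunc _))).aestronglyMeasurable)
    (by simpa using hmom.abs) (fun M => ae_of_all _ fun u => ?_) (ae_of_all _ fun u => ?_)
  · simpa [Real.norm_eq_abs, abs_abs] using abs_sub_trunc_le (by positivity : (0:ℝ) ≤ (M:ℝ)) u
  · refine tendsto_const_nhds.congr' ?_
    filter_upwards [eventually_ge_atTop ⌈|u|⌉₊] with n hn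
    rw [trunc_eq ((Nat.le_ceil _).trans (by exact_mod_cast hn))]
    simp

end Trunc

section Key

lemma integral_coord_comp {T : ℕ} {P : Measure (Fin T → ℝ)} {ν : Measure ℝ} (t : Fin T)
    (hmarg : P.map (fun x => x t) = ν) {g : ℝ → ℝ} (hg : Continuous g) :
    ∫ x, g (x t) ∂P = ∫ u, g u ∂ν := by
  rw [← hmarg, integral_map (measurable_pi_apply t).aemeasurable
    hg.stronglyMeasurable.aestronglyMeasurable]

lemma abs_le_abs_add_abs_sub (x y : ℝ) : |y| ≤ |x| + |x - y| := by
  have h1 := abs_sub_abs_le_abs_sub y x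
  have h2 : |y - x| = |x - y| := abs_sub_comm y x
  linarith

lemma key {T : ℕ} (μ : Fin T → Measure ℝ)
    (hmom : ∀ t, Integrable id (μ t))
    (Q : ℕ → ProbabilityMeasure (Fin T → ℝ))
    (hmargQ : ∀ n t, (Q n).toMeasure.map (fun x => x t) = μ t)
    (hA : Tendsto (fun n => Acts T (Q n).toMeasure) atTop (𝓝 0))
    (Qstar : ProbabilityMeasure (Fin T → ℝ))
    (hconv : Tendsto Q atTop (𝓝 Qstar))
    (hmargstar : ∀ t, Qstar.toMeasure.map (fun x => x t) = μ t)
    (i : ℕ) (h : i + 1 < T) (f : (Fin T → ℝ) → ℝ) (hfc : Continuous f)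
    (hfb : ∀ x, |f x| ≤ 1)
    (hfa : ∀ x y : Fin T → ℝ, (∀ j : Fin T, (j : ℕ) ≤ i → x j = y j) → f x = f y) :
    ∫ x, f x * (x ⟨i + 1, h⟩ - x ⟨i, Nat.lt_of_succ_lt h⟩) ∂Qstar.toMeasure = 0 := by
  set a : Fin T := ⟨i + 1, h⟩ with ha
  set b : Fin T := ⟨i, Nat.lt_of_succ_lt h⟩ with hb
  have hintQ : ∀ n t, Integrable (fun x => x t) (Q n).toMeasure :=
    fun n t => integrable_coord t (hmargQ n t) (hmom t)
  have hΔ : IsCtsStrategy T 1 (fun j => if j = i then f else 0) :=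
    strategy_single f hfc hfb hfa
  have hstep1 : ∀ n, |∫ x, f x * (x a - x b) ∂(Q n).toMeasure| ≤ Acts T (Q n).toMeasure := by
    intro n
    have := abs_integral_gain_le_acts hΔ (hintQ n)
    rwa [gain_single h f] at this
  set err : ℕ → ℝ := fun M =>
    ∫ u, |u - trunc M u| ∂(μ a) + ∫ u, |u - trunc M u| ∂(μ b) with herr_def
  have herr : Tendsto err atTop (𝓝 0) := by
    have := (tendsto_trunc_err (hmom a)).add (tendsto_trunc_err (hmom b))
    simpa using this
  -- claim A : truncation error bound, for any measure with the marginals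
  have claimA : ∀ P : Measure (Fin T → ℝ), IsProbabilityMeasure P →
      (∀ t, P.map (fun x => x t) = μ t) → ∀ M : ℕ,
      |∫ x, f x * (x a - x b) ∂P
        - ∫ x, f x * (trunc M (x a) - trunc M (x b)) ∂P| ≤ err M := by
    intro P hP hmargP M
    have hint : ∀ t, Integrable (fun x => x t) P :=
      fun t => integrable_coord t (hmargP t) (hmom t)
    have hMnn : (0:ℝ) ≤ (M:ℝ) := by positivity
    have htra : Integrable (fun x => trunc M (x a)) P := by
      refine (integrable_const (M:ℝ)).mono'
        ((continuous_trunc _).comp (continuous_apply a)).aestronglyMeasurable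
        (ae_of_all _ fun x => ?_)
      simpa [Real.norm_eq_abs] using abs_trunc_le hMnn (x a)
    have htrb : Integrable (fun x => trunc M (x b)) P := by
      refine (integrable_const (M:ℝ)).mono'
        ((continuous_trunc _).comp (continuous_apply b)).aestronglyMeasurable
        (ae_of_all _ fun x => ?_)
      simpa [Real.norm_eq_abs] using abs_trunc_le hMnn (x b)
    have hfbdd : ∃ C, ∀ x : Fin T → ℝ, ‖f x‖ ≤ C := ⟨1, fun x => by
      simpa [Real.norm_eq_abs] using hfb x⟩
    have hint1 : Integrable (fun x => f x * (x a - x b)) P :=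
      ((hint a).sub (hint b)).bdd_mul hfc.aestronglyMeasurable (ae_of_all _ hfbdd.choose_spec)
    have hint2 : Integrable (fun x => f x * (trunc M (x a) - trunc M (x b))) P :=
      (htra.sub htrb).bdd_mul hfc.aestronglyMeasurable (ae_of_all _ hfbdd.choose_spec)
    have hIa : Integrable (fun x : Fin T → ℝ => |x a - trunc M (x a)|) P := by
      simpa using ((hint a).sub htra).abs
    have hIb : Integrable (fun x : Fin T → ℝ => |x b - trunc M (x b)|) P := by
      simpa using ((hint b).sub htrb).abs
    rw [← integral_sub hint1 hint2]
    have heq : (fun x => f x * (x a - x b) - f x * (trunc M (x a) - trunc M (x b)))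
        = fun x => f x * (x a - trunc M (x a) - (x b - trunc M (x b))) := by
      funext x; ring
    rw [heq]
    have hint3 : Integrable (fun x => f x * (x a - trunc M (x a) - (x b - trunc M (x b)))) P :=
      (((hint a).sub htra).sub ((hint b).sub htrb)).bdd_mul hfc.aestronglyMeasurable (ae_of_all _ hfbdd.choose_spec)
    have hint4 : Integrable (fun x : Fin T → ℝ =>
        |x a - trunc M (x a)| + |x b - trunc M (x b)|) P := hIa.add hIb
    calc |∫ x, f x * (x a - trunc M (x a) - (x b - trunc M (x b))) ∂P|
        ≤ ∫ x, |f x * (x a - trunc M (x a) - (x b - trunc M (x b)))| ∂P := by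
          have := norm_integral_le_integral_norm (μ := P)
            (fun x => f x * (x a - trunc M (x a) - (x b - trunc M (x b))))
          simp only [Real.norm_eq_abs] at this
          exact this
      _ ≤ ∫ x, (|x a - trunc M (x a)| + |x b - trunc M (x b)|) ∂P := by
          refine integral_mono hint3.abs hint4 fun x => ?_
          rw [abs_mul]
          calc |f x| * |x a - trunc M (x a) - (x b - trunc M (x b))|
              ≤ 1 * (|x a - trunc M (x a)| + |x b - trunc M (x b)|) :=
                mul_le_mul (hfb x) (abs_sub _ _) (abs_nonneg _) zero_le_one
            _ = _ := one_mul _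
      _ = err M := by
          rw [integral_add hIa hIb]
          have h1 : ∫ x, |x a - trunc M (x a)| ∂P = ∫ u, |u - trunc M u| ∂(μ a) :=
            integral_coord_comp a (hmargP a)
              (continuous_abs.comp (continuous_id.sub (continuous_trunc _)))
          have h2 : ∫ x, |x b - trunc M (x b)| ∂P = ∫ u, |u - trunc M u| ∂(μ b) :=
            integral_coord_comp b (hmargP b)
              (continuous_abs.comp (continuous_id.sub (continuous_trunc _)))
          rw [h1, h2]
  -- bounded continuous truncated gain
  have hGc : ∀ M : ℕ, Continuous fun x : Fin T → ℝ =>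
      f x * (trunc M (x a) - trunc M (x b)) := fun M =>
    hfc.mul (((continuous_trunc _).comp (continuous_apply a)).sub
      ((continuous_trunc _).comp (continuous_apply b)))
  have hGb : ∀ M : ℕ, ∀ x : Fin T → ℝ,
      ‖f x * (trunc M (x a) - trunc M (x b))‖ ≤ 2 * M := by
    intro M x
    have hMnn : (0:ℝ) ≤ (M:ℝ) := by positivity
    rw [Real.norm_eq_abs, abs_mul]
    calc |f x| * |trunc M (x a) - trunc M (x b)| ≤ 1 * (M + M) := by
          refine mul_le_mul (hfb x) ((abs_sub _ _).trans ?_) (abs_nonneg _) zero_le_one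
          exact add_le_add (abs_trunc_le hMnn _) (abs_trunc_le hMnn _)
      _ = 2 * M := by ring
  set G : ℕ → BoundedContinuousFunction (Fin T → ℝ) ℝ := fun M =>
    BoundedContinuousFunction.ofNormedAddCommGroup _ (hGc M) (2 * M) (hGb M) with hG_def
  have hGtendsto : ∀ M : ℕ, Tendsto (fun n => ∫ x, (G M) x ∂(Q n).toMeasure) atTop
      (𝓝 (∫ x, (G M) x ∂Qstar.toMeasure)) := fun M =>
    ProbabilityMeasure.tendsto_iff_forall_integral_tendsto.mp hconv (G M)
  have hGcoe : ∀ M : ℕ, ∀ x, (G M) x = f x * (trunc M (x a) - trunc M (x b)) := fun M x => rfl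
  have hGint : ∀ M : ℕ, ∀ P : Measure (Fin T → ℝ),
      ∫ x, (G M) x ∂P = ∫ x, f x * (trunc M (x a) - trunc M (x b)) ∂P := fun M P => rfl
  -- bound for Qstar
  have hQstarbound : ∀ M : ℕ, |∫ x, (G M) x ∂Qstar.toMeasure| ≤ err M := by
    intro M
    have hle : ∀ n, |∫ x, (G M) x ∂(Q n).toMeasure| ≤ Acts T (Q n).toMeasure + err M := by
      intro n
      rw [hGint M]
      calc |∫ x, f x * (trunc M (x a) - trunc M (x b)) ∂(Q n).toMeasure|
          ≤ |∫ x, f x * (x a - x b) ∂(Q n).toMeasure| +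
            |∫ x, f x * (x a - x b) ∂(Q n).toMeasure
              - ∫ x, f x * (trunc M (x a) - trunc M (x b)) ∂(Q n).toMeasure| :=
            abs_le_abs_add_abs_sub _ _
        _ ≤ Acts T (Q n).toMeasure + err M :=
            add_le_add (hstep1 n) (claimA _ inferInstance (hmargQ n) M)
    have := le_of_tendsto_of_tendsto' ((hGtendsto M).abs)
      (hA.add (tendsto_const_nhds (x := err M))) hle
    simpa using this
  -- conclusion
  have hfinal : ∀ M : ℕ, |∫ x, f x * (x a - x b) ∂Qstar.toMeasure| ≤ 2 * err M := by
    intro M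
    have h1 := claimA Qstar.toMeasure inferInstance hmargstar M
    have h2 := hQstarbound M
    rw [hGint M] at h2
    have h3 : |∫ x, f x * (x a - x b) ∂Qstar.toMeasure|
        ≤ |∫ x, f x * (x a - x b) ∂Qstar.toMeasure
            - ∫ x, f x * (trunc M (x a) - trunc M (x b)) ∂Qstar.toMeasure|
          + |∫ x, f x * (trunc M (x a) - trunc M (x b)) ∂Qstar.toMeasure| := by
      have := abs_sub_abs_le_abs_sub (∫ x, f x * (x a - x b) ∂Qstar.toMeasure)
        (∫ x, f x * (trunc M (x a) - trunc M (x b)) ∂Qstar.toMeasure)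
      linarith
    linarith
  have h2err : Tendsto (fun M : ℕ => 2 * err M) atTop (𝓝 0) := by
    simpa using herr.const_mul 2
  exact abs_nonpos_iff.mp (ge_of_tendsto' h2err hfinal)

section Proj

def proj (T i : ℕ) (h : i + 1 < T) : (Fin T → ℝ) → (Fin (i + 1) → ℝ) :=
  fun x j => x ⟨j.1, lt_trans j.isLt h⟩

lemma continuous_proj {T i : ℕ} (h : i + 1 < T) : Continuous (proj T i h) :=
  continuous_pi fun _ => continuous_apply _

lemma canonicalFiltration_eq_comap {T i : ℕ} (h : i + 1 < T) :
    canonicalFiltration T i = MeasurableSpace.comap (proj T i h) inferInstance := by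
  have hpi : (inferInstance : MeasurableSpace (Fin (i + 1) → ℝ))
      = ⨆ j : Fin (i + 1), MeasurableSpace.comap
          (fun x : Fin (i + 1) → ℝ => x j) inferInstance := rfl
  rw [hpi, MeasurableSpace.comap_iSup]
  simp only [MeasurableSpace.comap_comp]
  unfold canonicalFiltration
  apply le_antisymm
  · refine iSup_le fun j => ?_
    have hk : ((fun y : Fin (i + 1) → ℝ => y ⟨(j.1 : ℕ), Nat.lt_succ_of_le j.2⟩)
          ∘ proj T i h) = fun x : Fin T → ℝ => x j.1 := by
      funext x
      rfl
    calc MeasurableSpace.comap (fun x : Fin T → ℝ => x j.1) inferInstance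
        = MeasurableSpace.comap ((fun y : Fin (i + 1) → ℝ =>
            y ⟨(j.1 : ℕ), Nat.lt_succ_of_le j.2⟩) ∘ proj T i h) inferInstance := by rw [hk]
      _ ≤ _ := le_iSup (fun k : Fin (i + 1) => MeasurableSpace.comap
            ((fun y : Fin (i + 1) → ℝ => y k) ∘ proj T i h) inferInstance)
            (⟨(j.1 : ℕ), Nat.lt_succ_of_le j.2⟩ : Fin (i + 1))
  · refine iSup_le fun k => ?_
    have hk : ((fun y : Fin (i + 1) → ℝ => y k) ∘ proj T i h)
        = fun x : Fin T → ℝ => x ⟨k.1, lt_trans k.isLt h⟩ := rfl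
    rw [hk]
    exact le_iSup (fun j : {j : Fin T // (j : ℕ) ≤ i} =>
        MeasurableSpace.comap (fun x : Fin T → ℝ => x j.1) inferInstance)
      ⟨⟨k.1, lt_trans k.isLt h⟩, Nat.lt_succ_iff.mp k.isLt⟩

end Proj

lemma ofReal_max_zero (r : ℝ) : ENNReal.ofReal (max r 0) = ENNReal.ofReal r := by
  rcases le_total r 0 with h | h
  · rw [max_eq_right h, ENNReal.ofReal_of_nonpos h, ENNReal.ofReal_zero]
  · rw [max_eq_left h]

lemma key' {T : ℕ} (μ : Fin T → Measure ℝ)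
    (hmom : ∀ t, Integrable id (μ t))
    (Q : ℕ → ProbabilityMeasure (Fin T → ℝ))
    (hmargQ : ∀ n t, (Q n).toMeasure.map (fun x => x t) = μ t)
    (hA : Tendsto (fun n => Acts T (Q n).toMeasure) atTop (𝓝 0))
    (Qstar : ProbabilityMeasure (Fin T → ℝ))
    (hconv : Tendsto Q atTop (𝓝 Qstar))
    (hmargstar : ∀ t, Qstar.toMeasure.map (fun x => x t) = μ t)
    (i : ℕ) (h : i + 1 < T) (f : (Fin T → ℝ) → ℝ) (hfc : Continuous f)
    (hfb : ∃ C, ∀ x, |f x| ≤ C)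
    (hfa : ∀ x y : Fin T → ℝ, (∀ j : Fin T, (j : ℕ) ≤ i → x j = y j) → f x = f y) :
    ∫ x, f x * (x ⟨i + 1, h⟩ - x ⟨i, Nat.lt_of_succ_lt h⟩) ∂Qstar.toMeasure = 0 := by
  obtain ⟨C, hC⟩ := hfb
  set c : ℝ := max C 1 with hc
  have hc1 : (1:ℝ) ≤ c := le_max_right _ _
  have hc0 : (0:ℝ) < c := lt_of_lt_of_le one_pos hc1
  have hkey := key μ hmom Q hmargQ hA Qstar hconv hmargstar i h
    (fun x => f x / c) (hfc.div_const c)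
    (fun x => by
      rw [abs_div, abs_of_pos hc0, div_le_one hc0]
      exact (hC x).trans (le_max_left _ _))
    (fun x y hxy => by show f x / c = f y / c; rw [hfa x y hxy])
  have heq : (fun x : Fin T → ℝ => f x / c * (x ⟨i + 1, h⟩ - x ⟨i, Nat.lt_of_succ_lt h⟩))
      = fun x => c⁻¹ • (f x * (x ⟨i + 1, h⟩ - x ⟨i, Nat.lt_of_succ_lt h⟩)) := by
    funext x; simp [smul_eq_mul]; ring
  rw [heq, integral_smul] at hkey
  have := smul_eq_zero.mp hkey
  rcases this with h' | h'
  · exact absurd h' (by positivity)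
  · exact h'

lemma setintegral_eq {T i : ℕ} (h : i + 1 < T) {P : Measure (Fin T → ℝ)}
    [IsProbabilityMeasure P]
    (hInta : Integrable (fun x => x ⟨i + 1, h⟩) P)
    (hIntb : Integrable (fun x => x ⟨i, Nat.lt_of_succ_lt h⟩) P)
    (hkey : ∀ f : (Fin T → ℝ) → ℝ, Continuous f → (∃ C, ∀ x, |f x| ≤ C) →
      (∀ x y : Fin T → ℝ, (∀ j : Fin T, (j : ℕ) ≤ i → x j = y j) → f x = f y) →
      ∫ x, f x * (x ⟨i + 1, h⟩ - x ⟨i, Nat.lt_of_succ_lt h⟩) ∂P = 0)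
    {s : Set (Fin T → ℝ)} (hs : MeasurableSet[canonicalFiltration T i] s) :
    ∫ x in s, x ⟨i, Nat.lt_of_succ_lt h⟩ ∂P = ∫ x in s, x ⟨i + 1, h⟩ ∂P := by
  set a : Fin T := ⟨i + 1, h⟩ with ha
  set b : Fin T := ⟨i, Nat.lt_of_succ_lt h⟩ with hb
  rw [canonicalFiltration_eq_comap h] at hs
  obtain ⟨B, hB, rfl⟩ := MeasurableSpace.measurableSet_comap.mp hs
  have hπ : Measurable (proj T i h) := (continuous_proj h).measurable
  have hsmeas : MeasurableSet (proj T i h ⁻¹' B) := hπ hB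
  have hd : Integrable (fun x => x a - x b) P := hInta.sub hIntb
  have hd' : Integrable (fun x => x b - x a) P := hIntb.sub hInta
  set p : (Fin T → ℝ) → ℝ := fun x => max (x a - x b) 0 with hp_def
  set q : (Fin T → ℝ) → ℝ := fun x => max (x b - x a) 0 with hq_def
  have hp : Integrable p P := hd.pos_part
  have hq : Integrable q P := hd'.pos_part
  set dp : (Fin T → ℝ) → ℝ≥0∞ := fun x => ENNReal.ofReal (x a - x b) with hdp_def
  set dm : (Fin T → ℝ) → ℝ≥0∞ := fun x => ENNReal.ofReal (x b - x a) with hdm_def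
  have hdpm : Measurable dp :=
    ((measurable_pi_apply a).sub (measurable_pi_apply b)).ennreal_ofReal
  have hdmm : Measurable dm :=
    ((measurable_pi_apply b).sub (measurable_pi_apply a)).ennreal_ofReal
  haveI hfin1 : IsFiniteMeasure (P.withDensity dp) :=
    isFiniteMeasure_withDensity_ofReal hd.hasFiniteIntegral
  haveI hfin2 : IsFiniteMeasure (P.withDensity dm) :=
    isFiniteMeasure_withDensity_ofReal hd'.hasFiniteIntegral
  haveI hfin1' : IsFiniteMeasure ((P.withDensity dp).map (proj T i h)) := by
    constructor
    rw [Measure.map_apply hπ MeasurableSet.univ, Set.preimage_univ]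
    exact measure_lt_top _ _
  haveI hfin2' : IsFiniteMeasure ((P.withDensity dm).map (proj T i h)) := by
    constructor
    rw [Measure.map_apply hπ MeasurableSet.univ, Set.preimage_univ]
    exact measure_lt_top _ _
  -- the two pushforward measures agree
  have hmeq : (P.withDensity dp).map (proj T i h) = (P.withDensity dm).map (proj T i h) := by
    apply ext_of_forall_lintegral_eq_of_IsFiniteMeasure
    intro g
    have hgm : Measurable fun y : Fin (i + 1) → ℝ => (g y : ℝ≥0∞) :=
      measurable_coe_nnreal_ennreal.comp g.continuous.measurable
    have hgπ : Measurable fun x : Fin T → ℝ => (g (proj T i h x) : ℝ≥0∞) := hgm.comp hπ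
    rw [lintegral_map hgm hπ, lintegral_map hgm hπ,
      lintegral_withDensity_eq_lintegral_mul P hdpm hgπ,
      lintegral_withDensity_eq_lintegral_mul P hdmm hgπ]
    set u : (Fin T → ℝ) → ℝ := fun x => (g (proj T i h x) : ℝ) with hu_def
    have hu0 : ∀ x, 0 ≤ u x := fun x => NNReal.coe_nonneg _
    have huc : Continuous u :=
      NNReal.continuous_coe.comp (g.continuous.comp (continuous_proj h))
    obtain ⟨Cg, hCg⟩ := g.bounded
    set cg : ℝ := (g 0 : ℝ) + Cg with hcg_def
    have hub : ∀ x, |u x| ≤ cg := by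
      intro x
      rw [abs_of_nonneg (hu0 x)]
      have := hCg (proj T i h x) 0
      rw [NNReal.dist_eq] at this
      have habs := (abs_le.mp this).2
      simp only [hu_def, hcg_def]
      linarith
    have hadapt : ∀ x y : Fin T → ℝ, (∀ j : Fin T, (j : ℕ) ≤ i → x j = y j) → u x = u y := by
      intro x y hxy
      have hproj : proj T i h x = proj T i h y :=
        funext fun k => hxy ⟨k.1, lt_trans k.isLt h⟩ (Nat.lt_succ_iff.mp k.isLt)
      simp only [hu_def, hproj]
    have h0 := hkey u huc ⟨cg, hub⟩ hadapt
    have hubn : ∃ C, ∀ x, ‖u x‖ ≤ C :=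
      ⟨cg, fun x => by simpa [Real.norm_eq_abs] using hub x⟩
    have hup : Integrable (fun x => u x * p x) P :=
      hp.bdd_mul huc.aestronglyMeasurable (ae_of_all _ hubn.choose_spec)
    have huq : Integrable (fun x => u x * q x) P :=
      hq.bdd_mul huc.aestronglyMeasurable (ae_of_all _ hubn.choose_spec)
    have hsplit : ∫ x, u x * p x ∂P = ∫ x, u x * q x ∂P := by
      have heq2 : (fun x => u x * p x - u x * q x) = fun x => u x * (x a - x b) := by
        funext x
        rw [← mul_sub]
        congr 1
        show max (x a - x b) 0 - max (x b - x a) 0 = x a - x b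
        rw [show x b - x a = -(x a - x b) by ring, max_zero_sub_max_neg_zero_eq_self]
      have h3 : ∫ x, (u x * p x - u x * q x) ∂P = 0 := by rw [heq2]; exact h0
      rw [integral_sub hup huq] at h3
      linarith
    have e1 : ∫⁻ x, dp x * (g (proj T i h x) : ℝ≥0∞) ∂P
        = ENNReal.ofReal (∫ x, u x * p x ∂P) := by
      rw [ofReal_integral_eq_lintegral_ofReal hup
        (ae_of_all _ fun x => mul_nonneg (hu0 x) (le_max_right _ _))]
      refine lintegral_congr fun x => ?_
      rw [ENNReal.ofReal_mul (hu0 x)]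
      have h1 : ENNReal.ofReal (u x) = (g (proj T i h x) : ℝ≥0∞) :=
        ENNReal.ofReal_coe_nnreal
      have h2 : ENNReal.ofReal (p x) = dp x := ofReal_max_zero _
      rw [h1, h2, mul_comm]
    have e2 : ∫⁻ x, dm x * (g (proj T i h x) : ℝ≥0∞) ∂P
        = ENNReal.ofReal (∫ x, u x * q x ∂P) := by
      rw [ofReal_integral_eq_lintegral_ofReal huq
        (ae_of_all _ fun x => mul_nonneg (hu0 x) (le_max_right _ _))]
      refine lintegral_congr fun x => ?_
      rw [ENNReal.ofReal_mul (hu0 x)]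
      have h1 : ENNReal.ofReal (u x) = (g (proj T i h x) : ℝ≥0∞) :=
        ENNReal.ofReal_coe_nnreal
      have h2 : ENNReal.ofReal (q x) = dm x := ofReal_max_zero _
      rw [h1, h2, mul_comm]
    simp only [Pi.mul_apply]
    rw [e1, e2, hsplit]
  -- apply to the set B
  have happ : ∫⁻ x in proj T i h ⁻¹' B, dp x ∂P = ∫⁻ x in proj T i h ⁻¹' B, dm x ∂P := by
    have h1 := congrArg (fun ν : Measure (Fin (i + 1) → ℝ) => ν B) hmeq
    simp only [Measure.map_apply hπ hB] at h1
    rwa [withDensity_apply _ hsmeas, withDensity_apply _ hsmeas] at h1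
  have hip : ENNReal.ofReal (∫ x in proj T i h ⁻¹' B, p x ∂P)
      = ∫⁻ x in proj T i h ⁻¹' B, dp x ∂P := by
    rw [ofReal_integral_eq_lintegral_ofReal hp.restrict
      (ae_of_all _ fun x => le_max_right _ _)]
    exact lintegral_congr fun x => ofReal_max_zero _
  have hiq : ENNReal.ofReal (∫ x in proj T i h ⁻¹' B, q x ∂P)
      = ∫⁻ x in proj T i h ⁻¹' B, dm x ∂P := by
    rw [ofReal_integral_eq_lintegral_ofReal hq.restrict
      (ae_of_all _ fun x => le_max_right _ _)]
    exact lintegral_congr fun x => ofReal_max_zero _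
  have hpq : ∫ x in proj T i h ⁻¹' B, p x ∂P = ∫ x in proj T i h ⁻¹' B, q x ∂P := by
    have h4 := hip.trans (happ.trans hiq.symm)
    exact (ENNReal.ofReal_eq_ofReal_iff
      (integral_nonneg fun x => le_max_right _ _)
      (integral_nonneg fun x => le_max_right _ _)).mp h4
  have hsub : ∫ x in proj T i h ⁻¹' B, (x a - x b) ∂P = 0 := by
    have heq3 : (fun x : Fin T → ℝ => x a - x b) = fun x => p x - q x := by
      funext x
      show x a - x b = max (x a - x b) 0 - max (x b - x a) 0
      rw [show x b - x a = -(x a - x b) by ring, max_zero_sub_max_neg_zero_eq_self]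
    rw [heq3, integral_sub hp.restrict hq.restrict, hpq, sub_self]
  rw [integral_sub hInta.restrict hIntb.restrict] at hsub
  linarith

/-- if `A¹_T(Q_N) → 0` along a sequence in `Π` and a subsequence converges
weakly to `Q_*`, then `Q_* ∈ Π` and `S` is a `Q_*`-martingale. -/
theorem stmt5 (T : ℕ) (hT : 2 ≤ T) (μ : Fin T → Measure ℝ)
    (hprob : ∀ t, IsProbabilityMeasure (μ t))
    (hsupp : ∀ t, μ t (Set.Iio 0) = 0)
    (hmom : ∀ t, Integrable id (μ t))
    (Q : ℕ → ProbabilityMeasure (Fin T → ℝ))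
    (hmarg : ∀ n t, (Q n).toMeasure.map (fun x => x t) = μ t)
    (hA : Tendsto (fun n => Acts T (Q n).toMeasure) atTop (nhds 0))
    (φ : ℕ → ℕ) (hφ : StrictMono φ)
    (Qstar : ProbabilityMeasure (Fin T → ℝ))
    (hconv : Tendsto (fun k => Q (φ k)) atTop (nhds Qstar)) :
    (∀ t, Qstar.toMeasure.map (fun x => x t) = μ t) ∧
    (∀ i : ℕ, ∀ h : i + 1 < T,
      Qstar.toMeasure[fun x => x ⟨i + 1, h⟩ | canonicalFiltration T i]
        =ᵐ[Qstar.toMeasure] fun x => x ⟨i, Nat.lt_of_succ_lt h⟩) := by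
  have hmargstar : ∀ t, Qstar.toMeasure.map (fun x => x t) = μ t := by
    intro t
    have hc : Continuous fun x : Fin T → ℝ => x t := continuous_apply t
    have h1 := ProbabilityMeasure.tendsto_map_of_tendsto_of_continuous _ _ hconv hc
    have heq : (fun k => (Q (φ k)).map hc.measurable.aemeasurable)
        = fun _ => (⟨μ t, hprob t⟩ : ProbabilityMeasure ℝ) := by
      funext k
      apply ProbabilityMeasure.toMeasure_injective
      show (Q (φ k)).toMeasure.map _ = μ t
      exact hmarg (φ k) t
    rw [heq] at h1
    have h2 : Qstar.map hc.measurable.aemeasurable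
        = (⟨μ t, hprob t⟩ : ProbabilityMeasure ℝ) :=
      tendsto_nhds_unique h1 tendsto_const_nhds
    have h3 := congrArg ProbabilityMeasure.toMeasure h2
    simpa using h3
  refine ⟨hmargstar, ?_⟩
  intro i h
  have hQ' : ∀ n t, ((Q ∘ φ) n).toMeasure.map (fun x => x t) = μ t := fun n t => hmarg (φ n) t
  have hA' : Tendsto (fun n => Acts T ((Q ∘ φ) n).toMeasure) atTop (𝓝 0) :=
    hA.comp hφ.tendsto_atTop
  have hkey : ∀ f : (Fin T → ℝ) → ℝ, Continuous f → (∃ C, ∀ x, |f x| ≤ C) →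
      (∀ x y : Fin T → ℝ, (∀ j : Fin T, (j : ℕ) ≤ i → x j = y j) → f x = f y) →
      ∫ x, f x * (x ⟨i + 1, h⟩ - x ⟨i, Nat.lt_of_succ_lt h⟩) ∂Qstar.toMeasure = 0 :=
    fun f hfc hfb hfa =>
      key' μ hmom (Q ∘ φ) hQ' hA' Qstar hconv hmargstar i h f hfc hfb hfa
  have hInta : Integrable (fun x => x (⟨i + 1, h⟩ : Fin T)) Qstar.toMeasure :=
    integrable_coord _ (hmargstar _) (hmom _)
  have hIntb : Integrable (fun x => x (⟨i, Nat.lt_of_succ_lt h⟩ : Fin T)) Qstar.toMeasure :=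
    integrable_coord _ (hmargstar _) (hmom _)
  have hm : canonicalFiltration T i ≤ (inferInstance : MeasurableSpace (Fin T → ℝ)) := by
    rw [canonicalFiltration_eq_comap h]
    exact measurable_iff_comap_le.mp (continuous_proj h).measurable
  haveI : SigmaFinite (Qstar.toMeasure.trim hm) := inferInstance
  have hsm : AEStronglyMeasurable[canonicalFiltration T i]
      (fun x : Fin T → ℝ => x ⟨i, Nat.lt_of_succ_lt h⟩) Qstar.toMeasure := by
    refine ⟨fun x => x ⟨i, Nat.lt_of_succ_lt h⟩, Measurable.stronglyMeasurable ?_,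
      Filter.EventuallyEq.rfl⟩
    have hle : MeasurableSpace.comap
        (fun x : Fin T → ℝ => x ⟨i, Nat.lt_of_succ_lt h⟩) inferInstance
          ≤ canonicalFiltration T i :=
      le_iSup (fun j : {j : Fin T // (j : ℕ) ≤ i} =>
        MeasurableSpace.comap (fun x : Fin T → ℝ => x j.1) inferInstance)
        ⟨⟨i, Nat.lt_of_succ_lt h⟩, le_rfl⟩
    exact measurable_iff_comap_le.mpr hle
  have hseteq : ∀ s, MeasurableSet[canonicalFiltration T i] s → Qstar.toMeasure s < ⊤ →
      ∫ x in s, x ⟨i, Nat.lt_of_succ_lt h⟩ ∂Qstar.toMeasure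
        = ∫ x in s, x ⟨i + 1, h⟩ ∂Qstar.toMeasure :=
    fun s hs _ => setintegral_eq h hInta hIntb hkey hs
  exact (ae_eq_condExp_of_forall_setIntegral_eq hm hInta
    (fun s _ _ => hIntb.integrableOn) hseteq hsm).symm
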